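/- Let N = 2, T > 0, and let ξ : [0,T] → ℝ² be Hölder continuous with exponent α > 1/2. Define F(x,t) = ∫₀^t Φ(x-ξ(s), t-s) ds with Φ the two-dimensional heat kernel. Then for each fixed t ∈ (0,T), lim_{x→ξ(t)} F(x,t) / log(1/|x-ξ(t)|) = 1/(2π). -/

import Mathlib

open MeasureTheory Real Set Metric Filter Topology

noncomputable section

/-- The heat kernel on ℝ². -/
def heatKernel2 (x : EuclideanSpace ℝ (Fin 2)) (t : ℝ) : ℝ :=
  (4 * π * t)⁻¹ * Real.exp (-‖x‖ ^ 2 / (4 * t))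

/-- The time-integrated heat kernel along the curve ξ. -/
def Fsol2 (ξ : ℝ → EuclideanSpace ℝ (Fin 2))
    (x : EuclideanSpace ℝ (Fin 2)) (t : ℝ) : ℝ :=
  ∫ s in (0 : ℝ)..t, heatKernel2 (x - ξ s) (t - s)

set_option maxHeartbeats 1000000

lemma exp_neg_le_inv {x : ℝ} (hx : 0 < x) : Real.exp (-x) ≤ x⁻¹ := by
  rw [Real.exp_neg]
  exact inv_anti₀ hx (by linarith [Real.add_one_le_exp x])

lemma hasDerivAt_G (c : ℝ) (hc : 0 < c) {u : ℝ} (hu : 0 < u) :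
    HasDerivAt (fun v => Real.log (v / c) * Real.exp (-c / v))
      (u⁻¹ * Real.exp (-c / u) + Real.log (u / c) * (c / u ^ 2 * Real.exp (-c / u))) u := by
  have h1 : HasDerivAt (fun v : ℝ => Real.log (v / c)) u⁻¹ u := by
    have hd : HasDerivAt (fun v : ℝ => v / c) (1 / c) u := (hasDerivAt_id u).div_const c
    have h := (Real.hasDerivAt_log (by positivity : u / c ≠ 0)).comp u hd
    rw [show (u / c)⁻¹ * (1 / c) = u⁻¹ by field_simp] at h
    exact h
  have h2 : HasDerivAt (fun v : ℝ => Real.exp (-c / v)) (c / u ^ 2 * Real.exp (-c / u)) u := by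
    have hd : HasDerivAt (fun v : ℝ => -c / v) (c / u ^ 2) u := by
      have h := (hasDerivAt_inv hu.ne').const_mul (-c)
      have h' : HasDerivAt (fun v : ℝ => -c / v) (-c * -(u ^ 2)⁻¹) u := by
        refine h.congr_of_eventuallyEq (Filter.Eventually.of_forall fun v => ?_)
        simp [div_eq_mul_inv]
      convert h' using 1
      field_simp
    simpa [mul_comm, Function.comp_def] using (Real.hasDerivAt_exp (-c / u)).comp u hd
  exact h1.mul h2

lemma I_small (c b : ℝ) (hc : 0 < c) (hcb : c ≤ b) (f : ℝ → ℝ)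
    (hf : IntervalIntegrable f volume 0 b)
    (hbound : ∀ u ∈ Ioc (0:ℝ) b, f u ≤ u⁻¹ * Real.exp (-c / u)) :
    ∫ u in (0:ℝ)..b, f u ≤ 1 + Real.log (b / c) := by
  have hb : 0 < b := hc.trans_le hcb
  have hf1 : IntervalIntegrable f volume 0 c :=
    hf.mono_set (by rw [uIcc_of_le hc.le, uIcc_of_le hb.le]; exact Icc_subset_Icc le_rfl hcb)
  have hf2 : IntervalIntegrable f volume c b :=
    hf.mono_set (by rw [uIcc_of_le hcb, uIcc_of_le hb.le]; exact Icc_subset_Icc hc.le le_rfl)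
  have hsplit : ∫ u in (0:ℝ)..b, f u = (∫ u in (0:ℝ)..c, f u) + ∫ u in c..b, f u :=
    (intervalIntegral.integral_add_adjacent_intervals hf1 hf2).symm
  have h1 : ∫ u in (0:ℝ)..c, f u ≤ 1 := by
    rw [intervalIntegral.integral_of_le hc.le]
    have : ∫ u in Ioc (0:ℝ) c, f u ≤ ∫ _ in Ioc (0:ℝ) c, c⁻¹ := by
      apply setIntegral_mono_on
      · rw [← intervalIntegrable_iff_integrableOn_Ioc_of_le hc.le]; exact hf1
      · exact integrableOn_const (by simp) (by simp)
      · exact measurableSet_Ioc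
      · intro u hu
        have hu0 : 0 < u := hu.1
        have hucb : u ∈ Ioc (0:ℝ) b := ⟨hu.1, hu.2.trans hcb⟩
        calc f u ≤ u⁻¹ * Real.exp (-c / u) := hbound u hucb
          _ ≤ u⁻¹ * (c / u)⁻¹ := by
              gcongr
              rw [neg_div]; exact exp_neg_le_inv (by positivity)
          _ = c⁻¹ := by field_simp
    calc ∫ u in Ioc (0:ℝ) c, f u ≤ ∫ _ in Ioc (0:ℝ) c, c⁻¹ := this
      _ = 1 := by
          rw [setIntegral_const]
          simp [Real.volume_Ioc, hc.le, smul_eq_mul]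
          field_simp
  have h2 : ∫ u in c..b, f u ≤ Real.log (b / c) := by
    set g' : ℝ → ℝ := fun u => u⁻¹ * Real.exp (-c / u) + Real.log (u / c) * (c / u ^ 2 * Real.exp (-c / u)) with hg'
    have hpos : ∀ u ∈ uIcc c b, (0:ℝ) < u := by
      rw [uIcc_of_le hcb]; exact fun u hu => hc.trans_le hu.1
    have hcont : ContinuousOn g' (uIcc c b) := by
      apply continuousOn_of_forall_continuousAt
      intro u hu
      have hu0 : u ≠ 0 := (hpos u hu).ne'
      have huc : u / c ≠ 0 := by positivity
      have hc0 : c ≠ 0 := hc.ne'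
      have hu2 : u ^ 2 ≠ 0 := pow_ne_zero 2 hu0
      fun_prop (disch := assumption)
    have hFTC : ∫ u in c..b, g' u
        = Real.log (b / c) * Real.exp (-c / b) - Real.log (c / c) * Real.exp (-c / c) := by
      apply intervalIntegral.integral_eq_sub_of_hasDerivAt
      · intro u hu; exact hasDerivAt_G c hc (hpos u hu)
      · exact hcont.intervalIntegrable
    have hmono : ∫ u in c..b, f u ≤ ∫ u in c..b, g' u := by
      apply intervalIntegral.integral_mono_on hcb hf2 hcont.intervalIntegrable
      intro u hu
      have hu0 : 0 < u := hc.trans_le hu.1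
      have h1 : f u ≤ u⁻¹ * Real.exp (-c / u) := hbound u ⟨hu0, hu.2⟩
      have h2 : 0 ≤ Real.log (u / c) * (c / u ^ 2 * Real.exp (-c / u)) := by
        apply mul_nonneg
        · apply Real.log_nonneg; rw [le_div_iff₀ hc]; simpa using hu.1
        · positivity
      simp only [hg']; linarith
    rw [hFTC] at hmono
    have hexp : Real.exp (-c / b) ≤ 1 := by
      rw [Real.exp_le_one_iff, neg_div, Left.neg_nonpos_iff]; positivity
    have hlognn : 0 ≤ Real.log (b / c) := by
      apply Real.log_nonneg; rw [le_div_iff₀ hc]; simpa using hcb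
    have : Real.log (b / c) * Real.exp (-c / b) ≤ Real.log (b / c) * 1 :=
      mul_le_mul_of_nonneg_left hexp hlognn
    simp only [div_self hc.ne', Real.log_one, zero_mul, sub_zero] at hmono
    linarith [hmono, this]
  linarith [hsplit, h1, h2]

lemma inv_intervalIntegrable {a b : ℝ} (ha : 0 < a) (hab : a ≤ b) :
    IntervalIntegrable (fun u : ℝ => u⁻¹) volume a b := by
  apply intervalIntegral.intervalIntegrable_inv
  · intro x hx
    rw [uIcc_of_le hab] at hx
    exact (ha.trans_le hx.1).ne'
  · exact continuousOn_id

lemma I_main_upper {a b K : ℝ} (ha : 0 < a) (hab : a ≤ b) {f : ℝ → ℝ}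
    (hf : IntervalIntegrable f volume a b) (hbound : ∀ u ∈ Icc a b, f u ≤ K * u⁻¹) :
    ∫ u in a..b, f u ≤ K * Real.log (b / a) := by
  have : ∫ u in a..b, f u ≤ ∫ u in a..b, K * u⁻¹ := by
    apply intervalIntegral.integral_mono_on hab hf ((inv_intervalIntegrable ha hab).const_mul K) hbound
  rwa [intervalIntegral.integral_const_mul, integral_inv_of_pos ha (ha.trans_le hab)] at this

lemma I_main_lower {a b K : ℝ} (ha : 0 < a) (hab : a ≤ b) {f : ℝ → ℝ}
    (hf : IntervalIntegrable f volume a b) (hbound : ∀ u ∈ Icc a b, K * u⁻¹ ≤ f u) :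
    K * Real.log (b / a) ≤ ∫ u in a..b, f u := by
  have : ∫ u in a..b, K * u⁻¹ ≤ ∫ u in a..b, f u := by
    apply intervalIntegral.integral_mono_on hab ((inv_intervalIntegrable ha hab).const_mul K) hf hbound
  rwa [intervalIntegral.integral_const_mul, integral_inv_of_pos ha (ha.trans_le hab)] at this

open MeasureTheory Real Set Metric Filter Topology


lemma estimate (T α L : ℝ) (hα : 1 / 2 < α) (hL : 0 < L)
    (ξ : ℝ → EuclideanSpace ℝ (Fin 2))
    (hHolder : ∀ a ∈ Icc (0 : ℝ) T, ∀ b ∈ Icc (0 : ℝ) T, ‖ξ a - ξ b‖ ≤ L * |a - b| ^ α)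
    (hξc : ContinuousOn ξ (Icc 0 T))
    (t : ℝ) (ht0 : 0 < t) (htT : t < T)
    (x : EuclideanSpace ℝ (Fin 2)) (r u₁ η M D : ℝ)
    (hr : r = ‖x - ξ t‖) (hr0 : 0 < r)
    (h16 : r ^ 2 / 16 ≤ u₁) (hu₁η : u₁ ≤ η) (hηt : η ≤ t)
    (hC1 : 2 * L * u₁ ^ α ≤ r)
    (hM : ∀ u ∈ Icc u₁ t, r * L * u ^ (α - 1) / 2 ≤ M)
    (hD : ∀ u ∈ Icc u₁ η, r ^ 2 / (4 * u) + r * L * u ^ (α - 1) / 2 + L ^ 2 * u ^ (2 * α - 1) / 4 ≤ D) :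
    (4 * π)⁻¹ * (Real.exp (-D) * Real.log (η / u₁)) ≤ Fsol2 ξ x t ∧
      Fsol2 ξ x t ≤ (4 * π)⁻¹ * ((1 + Real.log (u₁ / (r ^ 2 / 16))) + Real.exp M * Real.log (t / u₁)) := by
  have hπ : 0 < π := Real.pi_pos
  have hα0 : 0 < α := by linarith
  have hu₁0 : 0 < u₁ := lt_of_lt_of_le (by positivity) h16
  have hu₁t : u₁ ≤ t := hu₁η.trans hηt
  set f : ℝ → ℝ := fun u => heatKernel2 (x - ξ (t - u)) u with hf
  -- Step 1 : rewrite Fsol2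
  have key : Fsol2 ξ x t = ∫ u in (0:ℝ)..t, f u := by
    rw [Fsol2]
    have : (∫ s in (0:ℝ)..t, heatKernel2 (x - ξ s) (t - s)) = ∫ s in (0:ℝ)..t, f (t - s) :=
      intervalIntegral.integral_congr (fun s _ => by simp [hf, sub_sub_cancel])
    rw [this, intervalIntegral.integral_comp_sub_left f t]
    simp
  have hfval : ∀ u : ℝ, f u = (4 * π * u)⁻¹ * Real.exp (-‖x - ξ (t - u)‖ ^ 2 / (4 * u)) :=
    fun u => rfl
  have hf0 : ∀ u : ℝ, 0 ≤ u → 0 ≤ f u := by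
    intro u hu
    rw [hfval]
    have : (0:ℝ) ≤ (4 * π * u)⁻¹ := by positivity
    positivity
  -- distance bounds
  have hd : ∀ u ∈ Ioc (0:ℝ) t, |‖x - ξ (t - u)‖ - r| ≤ L * u ^ α := by
    intro u hu
    have h1 : t - u ∈ Icc (0:ℝ) T := ⟨by linarith [hu.2], by linarith [hu.1]⟩
    have h2 : t ∈ Icc (0:ℝ) T := ⟨ht0.le, htT.le⟩
    have h3 := hHolder (t - u) h1 t h2
    have h4 : |t - u - t| = u := by
      rw [show t - u - t = -u by ring, abs_neg, abs_of_pos hu.1]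
    rw [h4] at h3
    calc |‖x - ξ (t - u)‖ - r| = |‖x - ξ (t - u)‖ - ‖x - ξ t‖| := by rw [hr]
      _ ≤ ‖(x - ξ (t - u)) - (x - ξ t)‖ := abs_norm_sub_norm_le _ _
      _ = ‖ξ (t - u) - ξ t‖ := by rw [show (x - ξ (t - u)) - (x - ξ t) = -(ξ (t - u) - ξ t) by abel, norm_neg]
      _ ≤ L * u ^ α := h3
  -- upper bound (a) on (0, u₁]
  have hub1 : ∀ u ∈ Ioc (0:ℝ) u₁, f u ≤ (4 * π)⁻¹ * (u⁻¹ * Real.exp (-(r ^ 2 / 16) / u)) := by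
    intro u hu
    have hu0 : 0 < u := hu.1
    have hut : u ∈ Ioc (0:ℝ) t := ⟨hu.1, hu.2.trans hu₁t⟩
    have h5 := hd u hut
    have h6 : L * u ^ α ≤ r / 2 := by
      have : u ^ α ≤ u₁ ^ α := Real.rpow_le_rpow hu0.le hu.2 hα0.le
      nlinarith
    have h7 : r / 2 ≤ ‖x - ξ (t - u)‖ := by
      have := (abs_le.1 h5).1
      linarith
    have h8 : r ^ 2 / 4 ≤ ‖x - ξ (t - u)‖ ^ 2 := by nlinarith [norm_nonneg (x - ξ (t - u))]
    rw [hfval]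
    have e1 : (4 * π * u)⁻¹ = (4 * π)⁻¹ * u⁻¹ := by rw [mul_inv]
    rw [e1, mul_assoc]
    apply mul_le_mul_of_nonneg_left _ (by positivity : (0:ℝ) ≤ (4*π)⁻¹)
    apply mul_le_mul_of_nonneg_left _ (inv_nonneg.2 hu0.le)
    apply Real.exp_le_exp.2
    have e2 : -(r ^ 2 / 16) / u = -(r ^ 2 / 4) / (4 * u) := by
      field_simp; ring
    rw [e2]
    exact (div_le_div_iff_of_pos_right (by positivity)).2 (by linarith)
  -- upper bound (b) on [u₁, t]
  have hub2 : ∀ u ∈ Icc u₁ t, f u ≤ Real.exp M * ((4 * π)⁻¹ * u⁻¹) := by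
    intro u hu
    have hu0 : 0 < u := hu₁0.trans_le hu.1
    have hut : u ∈ Ioc (0:ℝ) t := ⟨hu0, hu.2⟩
    have h5 := hd u hut
    set d := ‖x - ξ (t - u)‖ with hdd
    have hd0 : 0 ≤ d := norm_nonneg _
    have hLu : 0 ≤ L * u ^ α := by positivity
    have hsq : r ^ 2 - 2 * r * L * u ^ α ≤ d ^ 2 := by
      rcases le_or_gt r (2 * L * u ^ α) with hcase | hcase
      · nlinarith [sq_nonneg d]
      · have h7 : r - L * u ^ α ≤ d := by
          have := (abs_le.1 h5).1; linarith
        nlinarith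
    have harg : -d ^ 2 / (4 * u) ≤ r * L * u ^ (α - 1) / 2 := by
      have e3 : u ^ (α - 1) = u ^ α / u := by
        rw [Real.rpow_sub hu0, Real.rpow_one]
      rw [e3]
      have key2 : -d ^ 2 / (4 * u) ≤ 2 * r * L * u ^ α / (4 * u) := by
        apply (div_le_div_iff_of_pos_right (by positivity)).2
        nlinarith [sq_nonneg r]
      have eq2 : 2 * r * L * u ^ α / (4 * u) = r * L * (u ^ α / u) / 2 := by
        field_simp; ring
      linarith
    have hMle : -d ^ 2 / (4 * u) ≤ M := harg.trans (hM u hu)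
    rw [hfval]
    calc (4 * π * u)⁻¹ * Real.exp (-d ^ 2 / (4 * u))
        ≤ (4 * π * u)⁻¹ * Real.exp M := by
          apply mul_le_mul_of_nonneg_left (Real.exp_le_exp.2 hMle) (by positivity)
      _ = Real.exp M * ((4 * π)⁻¹ * u⁻¹) := by rw [mul_inv]; ring
  -- lower bound (c) on [u₁, η]
  have hlb : ∀ u ∈ Icc u₁ η, Real.exp (-D) * ((4 * π)⁻¹ * u⁻¹) ≤ f u := by
    intro u hu
    have hu0 : 0 < u := hu₁0.trans_le hu.1
    have hut : u ∈ Ioc (0:ℝ) t := ⟨hu0, (hu.2.trans hηt)⟩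
    have h5 := hd u hut
    set d := ‖x - ξ (t - u)‖ with hdd
    have hd0 : 0 ≤ d := norm_nonneg _
    have h7 : d ≤ r + L * u ^ α := by
      have := (abs_le.1 h5).2; linarith
    have hsq : d ^ 2 ≤ (r + L * u ^ α) ^ 2 := by
      nlinarith [Real.rpow_nonneg hu0.le α]
    have e3 : u ^ (α - 1) = u ^ α / u := by
      rw [Real.rpow_sub hu0, Real.rpow_one]
    have e4 : u ^ (2 * α - 1) = u ^ α * u ^ α / u := by
      rw [show 2 * α - 1 = α + α - 1 by ring, Real.rpow_sub hu0, Real.rpow_add hu0, Real.rpow_one]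
    have harg : d ^ 2 / (4 * u) ≤ D := by
      have expand : ∀ w : ℝ, (r + L * w) ^ 2 / (4 * u)
          = r ^ 2 / (4 * u) + r * L * (w / u) / 2 + L ^ 2 * (w * w / u) / 4 := by
        intro w
        field_simp
        ring
      have h9 := hD u hu
      have expand2 : (r + L * u ^ α) ^ 2 / (4 * u)
          = r ^ 2 / (4 * u) + r * L * u ^ (α - 1) / 2 + L ^ 2 * u ^ (2 * α - 1) / 4 := by
        rw [expand (u ^ α), ← e3, ← e4]
      have h10 : (r + L * u ^ α) ^ 2 / (4 * u) ≤ D := by rw [expand2]; exact h9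
      refine le_trans ?_ h10
      exact (div_le_div_iff_of_pos_right (by positivity)).2 hsq
    rw [hfval]
    calc Real.exp (-D) * ((4 * π)⁻¹ * u⁻¹)
        = (4 * π * u)⁻¹ * Real.exp (-D) := by rw [mul_inv]; ring
      _ ≤ (4 * π * u)⁻¹ * Real.exp (-d ^ 2 / (4 * u)) := by
          apply mul_le_mul_of_nonneg_left _ (by positivity)
          apply Real.exp_le_exp.2
          rw [neg_div]
          exact neg_le_neg harg
  -- continuity on Ioc 0 t
  have hcξ : ContinuousOn (fun u : ℝ => ξ (t - u)) (Ioc 0 t) :=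
    hξc.comp ((continuous_const.sub continuous_id).continuousOn)
      (fun u hu => ⟨by linarith [hu.2], by linarith [hu.1]⟩)
  have hcontf : ContinuousOn f (Ioc 0 t) := by
    have h1 : ContinuousOn (fun u : ℝ => (4 * π * u)⁻¹) (Ioc 0 t) :=
      (continuousOn_const.mul continuousOn_id).inv₀
        (fun u hu => (mul_pos (by positivity : (0:ℝ) < 4 * π) (hu.1 : (0:ℝ) < u)).ne')
    have h2 : ContinuousOn (fun u : ℝ => Real.exp (-‖x - ξ (t - u)‖ ^ 2 / (4 * u))) (Ioc 0 t) := by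
      apply Real.continuous_exp.comp_continuousOn
      apply ContinuousOn.div
      · exact (((continuousOn_const.sub hcξ).norm).pow 2).neg
      · exact continuousOn_const.mul continuousOn_id
      · intro u hu; have := hu.1; positivity
    exact (h1.mul h2).congr (fun u hu => hfval u)
  -- integrability
  have hInt : IntervalIntegrable f volume 0 t := by
    rw [intervalIntegrable_iff_integrableOn_Ioc_of_le ht0.le]
    refine ⟨hcontf.aestronglyMeasurable measurableSet_Ioc, ?_⟩
    apply HasFiniteIntegral.restrict_of_bounded
      (C := (4 * π)⁻¹ * (16 / r ^ 2) + (4 * π * u₁)⁻¹) measure_Ioc_lt_top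
    filter_upwards [ae_restrict_mem measurableSet_Ioc] with u hu
    rw [Real.norm_eq_abs, abs_of_nonneg (hf0 u hu.1.le)]
    have hu0 : 0 < u := hu.1
    rcases le_or_gt u u₁ with h | h
    · have hb := hub1 u ⟨hu.1, h⟩
      have h2 : u⁻¹ * Real.exp (-(r ^ 2 / 16) / u) ≤ 16 / r ^ 2 := by
        have he : Real.exp (-(r ^ 2 / 16) / u) ≤ (r ^ 2 / 16 / u)⁻¹ := by
          rw [neg_div]
          exact exp_neg_le_inv (by positivity)
        calc u⁻¹ * Real.exp (-(r ^ 2 / 16) / u) ≤ u⁻¹ * (r ^ 2 / 16 / u)⁻¹ :=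
              mul_le_mul_of_nonneg_left he (by positivity)
          _ = 16 / r ^ 2 := by field_simp
      have h3 : f u ≤ (4 * π)⁻¹ * (16 / r ^ 2) :=
        hb.trans (mul_le_mul_of_nonneg_left h2 (by positivity))
      have h4 : (0:ℝ) ≤ (4 * π * u₁)⁻¹ := by positivity
      linarith
    · have hfu : f u ≤ (4 * π * u)⁻¹ := by
        rw [hfval]
        calc (4 * π * u)⁻¹ * Real.exp (-‖x - ξ (t - u)‖ ^ 2 / (4 * u))
            ≤ (4 * π * u)⁻¹ * 1 := by
              apply mul_le_mul_of_nonneg_left _ (by positivity)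
              rw [Real.exp_le_one_iff]
              apply div_nonpos_of_nonpos_of_nonneg
              · simp [sq_nonneg]
              · positivity
          _ = (4 * π * u)⁻¹ := mul_one _
      have h5 : (4 * π * u)⁻¹ ≤ (4 * π * u₁)⁻¹ :=
        inv_anti₀ (by positivity) (by nlinarith)
      have h6 : (0:ℝ) ≤ (4 * π)⁻¹ * (16 / r ^ 2) := by positivity
      linarith
  have hInt1 : IntervalIntegrable f volume 0 u₁ :=
    hInt.mono_set (by rw [uIcc_of_le hu₁0.le, uIcc_of_le ht0.le]; exact Icc_subset_Icc le_rfl hu₁t)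
  have hInt2 : IntervalIntegrable f volume u₁ t :=
    hInt.mono_set (by rw [uIcc_of_le hu₁t, uIcc_of_le ht0.le]; exact Icc_subset_Icc hu₁0.le le_rfl)
  have hInt2a : IntervalIntegrable f volume u₁ η :=
    hInt2.mono_set (by rw [uIcc_of_le hu₁η, uIcc_of_le hu₁t]; exact Icc_subset_Icc le_rfl hηt)
  have hInt2b : IntervalIntegrable f volume η t :=
    hInt2.mono_set (by rw [uIcc_of_le hηt, uIcc_of_le hu₁t]; exact Icc_subset_Icc hu₁η le_rfl)
  -- upper bound assembly
  have hU1 : ∫ u in (0:ℝ)..u₁, f u ≤ (4 * π)⁻¹ * (1 + Real.log (u₁ / (r ^ 2 / 16))) := by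
    have hIs := I_small (r ^ 2 / 16) u₁ (by positivity) h16 (fun u => 4 * π * f u)
      (hInt1.const_mul (4 * π))
      (fun u hu => by
        have hb := hub1 u hu
        calc 4 * π * f u ≤ 4 * π * ((4 * π)⁻¹ * (u⁻¹ * Real.exp (-(r ^ 2 / 16) / u))) :=
              mul_le_mul_of_nonneg_left hb (by positivity)
          _ = u⁻¹ * Real.exp (-(r ^ 2 / 16) / u) := by
              rw [← mul_assoc, mul_inv_cancel₀ (by positivity : (4:ℝ) * π ≠ 0), one_mul]
          _ = u⁻¹ * Real.exp (-(r ^ 2 / 16) / u) := rfl)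
    rw [intervalIntegral.integral_const_mul] at hIs
    calc ∫ u in (0:ℝ)..u₁, f u
        = (4 * π)⁻¹ * (4 * π * ∫ u in (0:ℝ)..u₁, f u) := by
          rw [← mul_assoc, inv_mul_cancel₀ (by positivity : (4:ℝ) * π ≠ 0), one_mul]
      _ ≤ (4 * π)⁻¹ * (1 + Real.log (u₁ / (r ^ 2 / 16))) :=
          mul_le_mul_of_nonneg_left hIs (by positivity)
  have hU2 : ∫ u in u₁..t, f u ≤ Real.exp M * (4 * π)⁻¹ * Real.log (t / u₁) :=
    I_main_upper hu₁0 hu₁t hInt2 (fun u hu => by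
      have := hub2 u hu
      calc f u ≤ Real.exp M * ((4 * π)⁻¹ * u⁻¹) := this
        _ = Real.exp M * (4 * π)⁻¹ * u⁻¹ := by ring)
  have hsplit2 : ∫ u in (0:ℝ)..t, f u = (∫ u in (0:ℝ)..u₁, f u) + ∫ u in u₁..t, f u :=
    (intervalIntegral.integral_add_adjacent_intervals hInt1 hInt2).symm
  -- lower bound assembly
  have hL2 : Real.exp (-D) * (4 * π)⁻¹ * Real.log (η / u₁) ≤ ∫ u in u₁..η, f u :=
    I_main_lower hu₁0 hu₁η hInt2a (fun u hu => by
      have := hlb u hu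
      calc Real.exp (-D) * (4 * π)⁻¹ * u⁻¹ = Real.exp (-D) * ((4 * π)⁻¹ * u⁻¹) := by ring
        _ ≤ f u := this)
  have hnn1 : (0:ℝ) ≤ ∫ u in (0:ℝ)..u₁, f u :=
    intervalIntegral.integral_nonneg hu₁0.le (fun u hu => hf0 u hu.1)
  have hnn3 : (0:ℝ) ≤ ∫ u in η..t, f u :=
    intervalIntegral.integral_nonneg hηt (fun u hu => hf0 u (le_trans (hu₁0.trans_le hu₁η).le hu.1))
  have hsplit3 : ∫ u in u₁..t, f u = (∫ u in u₁..η, f u) + ∫ u in η..t, f u :=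
    (intervalIntegral.integral_add_adjacent_intervals hInt2a hInt2b).symm
  constructor
  · rw [key, hsplit2, hsplit3]
    nlinarith [hL2, hnn1, hnn3]
  · rw [key, hsplit2]
    have : (4 * π)⁻¹ * (1 + Real.log (u₁ / (r ^ 2 / 16))) + Real.exp M * (4 * π)⁻¹ * Real.log (t / u₁)
        = (4 * π)⁻¹ * ((1 + Real.log (u₁ / (r ^ 2 / 16))) + Real.exp M * Real.log (t / u₁)) := by
      ring
    linarith
noncomputable section

lemma sqrt_atTop' : Tendsto Real.sqrt atTop atTop := by
  apply tendsto_atTop_mono' atTop _ (tendsto_rpow_atTop (by norm_num : (0:ℝ) < 1/2))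
  filter_upwards [eventually_ge_atTop (0:ℝ)] with v hv
  rw [Real.sqrt_eq_rpow]

lemma sqrt_div_tendsto : Tendsto (fun v : ℝ => Real.sqrt v / v) atTop (𝓝 0) := by
  have h2 : Tendsto (fun v : ℝ => 1 / Real.sqrt v) atTop (𝓝 0) := by
    have := tendsto_inv_atTop_zero.comp sqrt_atTop'
    simpa [one_div, Function.comp_def] using this
  refine h2.congr (fun v => ?_)
  rw [Real.sqrt_div_self']

lemma log_div_tendsto : Tendsto (fun v : ℝ => Real.log v / v) atTop (𝓝 0) := by
  have := Real.isLittleO_log_id_atTop.tendsto_div_nhds_zero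
  simpa using this

lemma tendsto_exp_aux (a : ℝ) (ha : 0 < a) (φ : ℝ → ℝ)
    (hφ : Tendsto (fun v => φ v / v) atTop (𝓝 0)) :
    Tendsto (fun v => Real.exp (-a * v + φ v)) atTop (𝓝 0) := by
  have hg : Tendsto (fun v => -a + φ v / v) atTop (𝓝 (-a)) := by
    have : Tendsto (fun _ : ℝ => -a) atTop (𝓝 (-a)) := tendsto_const_nhds
    have := this.add hφ
    simpa using this
  have h1 : Tendsto (fun v : ℝ => v * (-a + φ v / v)) atTop atBot :=
    tendsto_id.atTop_mul_neg (by linarith) hg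
  have h2 : (fun v : ℝ => -a * v + φ v) =ᶠ[atTop] fun v => v * (-a + φ v / v) := by
    filter_upwards [eventually_gt_atTop (0:ℝ)] with v hv
    field_simp
  exact Real.tendsto_exp_atBot.comp (h1.congr' h2.symm)

lemma tendsto_exp_neg_sqrt : Tendsto (fun v : ℝ => Real.exp (-Real.sqrt v)) atTop (𝓝 0) :=
  Real.tendsto_exp_atBot.comp (tendsto_neg_atTop_atBot.comp sqrt_atTop')

def u1f (r : ℝ) : ℝ := r ^ 2 * Real.exp (Real.sqrt (-Real.log r))
def etaf (r : ℝ) : ℝ := (-Real.log r)⁻¹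
def Mf (L α t r : ℝ) : ℝ := r * L * (u1f r ^ (α - 1) + t ^ (α - 1)) / 2
def Df (L α r : ℝ) : ℝ :=
  r ^ 2 / (4 * u1f r) + r * L * (u1f r ^ (α - 1) + etaf r ^ (α - 1)) / 2
    + L ^ 2 * etaf r ^ (2 * α - 1) / 4
def UBf (L α t r : ℝ) : ℝ :=
  (4 * π)⁻¹ * ((1 + Real.log (u1f r / (r ^ 2 / 16)))
    + Real.exp (Mf L α t r) * Real.log (t / u1f r)) / (-Real.log r)
def LBf (L α r : ℝ) : ℝ :=
  (4 * π)⁻¹ * (Real.exp (-Df L α r) * Real.log (etaf r / u1f r)) / (-Real.log r)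

def gMf (L α t v : ℝ) : ℝ :=
  L * (Real.exp (-(2 * α - 1) * v + (α - 1) * Real.sqrt v) + Real.exp (-v) * t ^ (α - 1)) / 2
def gDf (L α v : ℝ) : ℝ :=
  Real.exp (-Real.sqrt v) / 4
    + L * (Real.exp (-(2 * α - 1) * v + (α - 1) * Real.sqrt v) + Real.exp (-v) * v ^ (1 - α)) / 2
    + L ^ 2 * v ^ (1 - 2 * α) / 4
def gUf (L α t v : ℝ) : ℝ :=
  (4 * π)⁻¹ * ((1 + (Real.log 16 + Real.sqrt v))
    + Real.exp (gMf L α t v) * (Real.log t + 2 * v - Real.sqrt v)) / v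
def gLf (L α v : ℝ) : ℝ :=
  (4 * π)⁻¹ * (Real.exp (-gDf L α v) * (2 * v - Real.sqrt v - Real.log v)) / v

lemma rsq_eq {r : ℝ} (hr0 : 0 < r) : r ^ 2 = Real.exp (-(2 * (-Real.log r))) := by
  rw [show -(2 * (-Real.log r)) = Real.log r + Real.log r by ring, Real.exp_add,
    Real.exp_log hr0]
  ring

lemma u1f_eq {r : ℝ} (hr0 : 0 < r) :
    u1f r = Real.exp (Real.sqrt (-Real.log r) - 2 * (-Real.log r)) := by
  rw [u1f, rsq_eq hr0, ← Real.exp_add]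
  congr 1
  ring

lemma u1f_pos {r : ℝ} (hr0 : 0 < r) : 0 < u1f r := by
  rw [u1f_eq hr0]; exact Real.exp_pos _

lemma log_u1f {r : ℝ} (hr0 : 0 < r) :
    Real.log (u1f r) = Real.sqrt (-Real.log r) - 2 * (-Real.log r) := by
  rw [u1f_eq hr0, Real.log_exp]

lemma r_eq_exp {r : ℝ} (hr0 : 0 < r) : r = Real.exp (-(-Real.log r)) := by
  rw [neg_neg, Real.exp_log hr0]

lemma Mf_eq {L α t r : ℝ} (hr0 : 0 < r) : Mf L α t r = gMf L α t (-Real.log r) := by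
  set v := -Real.log r with hvv
  rw [Mf, gMf]
  have h1 : u1f r ^ (α - 1) = Real.exp ((Real.sqrt v - 2 * v) * (α - 1)) := by
    rw [u1f_eq hr0, ← Real.exp_mul]
  rw [h1]
  nth_rewrite 1 [r_eq_exp hr0]
  rw [show -(2 * α - 1) * v + (α - 1) * Real.sqrt v = -v + (Real.sqrt v - 2 * v) * (α - 1) by ring,
    Real.exp_add]
  ring

lemma Df_eq {L α r : ℝ} (hr0 : 0 < r) (hr1 : r < 1) : Df L α r = gDf L α (-Real.log r) := by
  set v := -Real.log r with hvv
  have hv0 : 0 < v := by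
    rw [hvv]; simpa using Real.log_neg hr0 hr1
  have e1 : r ^ 2 / (4 * u1f r) = Real.exp (-Real.sqrt v) / 4 := by
    rw [u1f, Real.exp_neg]
    rw [show r ^ 2 / (4 * (r ^ 2 * Real.exp (Real.sqrt v))) = (4 * Real.exp (Real.sqrt v))⁻¹ from by
      field_simp]
    rw [mul_inv]
    ring
  have e2 : etaf r ^ (α - 1) = v ^ (1 - α) := by
    rw [etaf, ← hvv, Real.inv_rpow hv0.le, ← Real.rpow_neg hv0.le]
    congr 1; ring
  have e3 : etaf r ^ (2 * α - 1) = v ^ (1 - 2 * α) := by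
    rw [etaf, ← hvv, Real.inv_rpow hv0.le, ← Real.rpow_neg hv0.le]
    congr 1; ring
  have h1 : u1f r ^ (α - 1) = Real.exp ((Real.sqrt v - 2 * v) * (α - 1)) := by
    rw [u1f_eq hr0, ← Real.exp_mul]
  rw [Df, gDf, e1, e2, e3, h1]
  nth_rewrite 1 [r_eq_exp hr0]
  rw [show -(2 * α - 1) * v + (α - 1) * Real.sqrt v = -v + (Real.sqrt v - 2 * v) * (α - 1) by ring,
    Real.exp_add]
  ring

lemma UBf_eq {L α t r : ℝ} (hr0 : 0 < r) (hr1 : r < 1) (ht0 : 0 < t) :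
    UBf L α t r = gUf L α t (-Real.log r) := by
  set v := -Real.log r with hvv
  have e1 : Real.log (u1f r / (r ^ 2 / 16)) = Real.log 16 + Real.sqrt v := by
    have : u1f r / (r ^ 2 / 16) = 16 * Real.exp (Real.sqrt v) := by
      rw [u1f]; field_simp; ring
    rw [this, Real.log_mul (by norm_num) (Real.exp_ne_zero _), Real.log_exp]
  have e2 : Real.log (t / u1f r) = Real.log t + 2 * v - Real.sqrt v := by
    rw [Real.log_div ht0.ne' (u1f_pos hr0).ne', log_u1f hr0, ← hvv]
    ring
  rw [UBf, gUf, e1, e2, Mf_eq hr0, ← hvv]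

lemma LBf_eq {L α r : ℝ} (hr0 : 0 < r) (hr1 : r < 1) : LBf L α r = gLf L α (-Real.log r) := by
  set v := -Real.log r with hvv
  have hv0 : 0 < v := by
    rw [hvv]; simpa using Real.log_neg hr0 hr1
  have e2 : Real.log (etaf r / u1f r) = 2 * v - Real.sqrt v - Real.log v := by
    rw [Real.log_div (by rw [etaf, ← hvv]; positivity) (u1f_pos hr0).ne', log_u1f hr0,
      etaf, ← hvv, Real.log_inv]
    ring
  rw [LBf, gLf, e2, Df_eq hr0 hr1, ← hvv]

lemma gMf_tendsto {L α t : ℝ} (hα : 1 / 2 < α) :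
    Tendsto (gMf L α t) atTop (𝓝 0) := by
  have h1 : Tendsto (fun v => Real.exp (-(2 * α - 1) * v + (α - 1) * Real.sqrt v)) atTop (𝓝 0) := by
    apply tendsto_exp_aux (2 * α - 1) (by linarith)
    have := sqrt_div_tendsto.const_mul (α - 1)
    simpa [mul_div_assoc] using this
  have h2 : Tendsto (fun v : ℝ => Real.exp (-v) * t ^ (α - 1)) atTop (𝓝 0) := by
    have := Real.tendsto_exp_neg_atTop_nhds_zero.mul_const (t ^ (α - 1))
    simpa using this
  have H := ((h1.add h2).const_mul L).div_const 2
  simp only [add_zero, zero_add, mul_zero, zero_div] at H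
  exact H

lemma gDf_tendsto {L α : ℝ} (hα : 1 / 2 < α) :
    Tendsto (gDf L α) atTop (𝓝 0) := by
  have h0 : Tendsto (fun v : ℝ => Real.exp (-Real.sqrt v) / 4) atTop (𝓝 0) := by
    simpa using tendsto_exp_neg_sqrt.div_const 4
  have h1 : Tendsto (fun v => Real.exp (-(2 * α - 1) * v + (α - 1) * Real.sqrt v)) atTop (𝓝 0) := by
    apply tendsto_exp_aux (2 * α - 1) (by linarith)
    have := sqrt_div_tendsto.const_mul (α - 1)
    simpa [mul_div_assoc] using this
  have h2 : Tendsto (fun v : ℝ => Real.exp (-v) * v ^ (1 - α)) atTop (𝓝 0) := by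
    have haux : Tendsto (fun v : ℝ => Real.exp (-1 * v + (1 - α) * Real.log v)) atTop (𝓝 0) := by
      apply tendsto_exp_aux 1 one_pos
      have := log_div_tendsto.const_mul (1 - α)
      simpa [mul_div_assoc] using this
    apply haux.congr'
    filter_upwards [eventually_gt_atTop (0:ℝ)] with v hv
    rw [Real.rpow_def_of_pos hv, ← Real.exp_add]
    congr 1
    ring
  have h3 : Tendsto (fun v : ℝ => L ^ 2 * v ^ (1 - 2 * α) / 4) atTop (𝓝 0) := by
    have := (tendsto_rpow_neg_atTop (by linarith : (0:ℝ) < 2 * α - 1)).const_mul (L ^ 2) |>.div_const 4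
    have h4 : (fun v : ℝ => L ^ 2 * v ^ (-(2 * α - 1)) / 4) = fun v : ℝ => L ^ 2 * v ^ (1 - 2 * α) / 4 := by
      funext v
      rw [show -(2 * α - 1) = 1 - 2 * α by ring]
    rw [h4] at this
    simpa using this
  have H := (h0.add (((h1.add h2).const_mul L).div_const 2)).add h3
  simp only [add_zero, zero_add, mul_zero, zero_div] at H
  exact H

lemma gUf_tendsto {L α t : ℝ} (hα : 1 / 2 < α) :
    Tendsto (gUf L α t) atTop (𝓝 (1 / (2 * π))) := by
  have hexp : Tendsto (fun v => Real.exp (gMf L α t v)) atTop (𝓝 1) := by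
    have := (Real.continuous_exp.tendsto 0).comp (gMf_tendsto hα (t := t) (L := L))
    simpa [Function.comp_def] using this
  have hc : Tendsto (fun v : ℝ => (1 + Real.log 16) / v) atTop (𝓝 0) :=
    tendsto_const_nhds.div_atTop tendsto_id
  have hlt : Tendsto (fun v : ℝ => Real.log t / v) atTop (𝓝 0) :=
    tendsto_const_nhds.div_atTop tendsto_id
  have hmain : Tendsto (fun v : ℝ => (1 + Real.log 16) / v + Real.sqrt v / v
      + Real.exp (gMf L α t v) * (Real.log t / v + 2 - Real.sqrt v / v)) atTop
      (𝓝 (0 + 0 + 1 * (0 + 2 - 0))) := by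
    exact (hc.add sqrt_div_tendsto).add
      (hexp.mul ((hlt.add tendsto_const_nhds).sub sqrt_div_tendsto))
  have heq : (fun v : ℝ => (4 * π)⁻¹ * ((1 + Real.log 16) / v + Real.sqrt v / v
      + Real.exp (gMf L α t v) * (Real.log t / v + 2 - Real.sqrt v / v)))
      =ᶠ[atTop] gUf L α t := by
    filter_upwards [eventually_gt_atTop (0:ℝ)] with v hv
    rw [gUf]
    field_simp
    ring
  have H := hmain.const_mul ((4 * π)⁻¹)
  have hval : (4 * π)⁻¹ * ((0:ℝ) + 0 + 1 * (0 + 2 - 0)) = 1 / (2 * π) := by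
    have : π ≠ 0 := Real.pi_ne_zero
    field_simp
    ring
  rw [hval] at H
  exact Tendsto.congr' heq H

lemma gLf_tendsto {L α : ℝ} (hα : 1 / 2 < α) :
    Tendsto (gLf L α) atTop (𝓝 (1 / (2 * π))) := by
  have hexp : Tendsto (fun v => Real.exp (-gDf L α v)) atTop (𝓝 1) := by
    have hn := (gDf_tendsto hα (L := L)).neg
    rw [neg_zero] at hn
    have := (Real.continuous_exp.tendsto 0).comp hn
    simpa [Function.comp_def] using this
  have hmain : Tendsto (fun v : ℝ => Real.exp (-gDf L α v)
      * (2 - Real.sqrt v / v - Real.log v / v)) atTop (𝓝 (1 * (2 - 0 - 0))) :=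
    hexp.mul ((tendsto_const_nhds.sub sqrt_div_tendsto).sub log_div_tendsto)
  have heq : (fun v : ℝ => (4 * π)⁻¹ * (Real.exp (-gDf L α v)
      * (2 - Real.sqrt v / v - Real.log v / v))) =ᶠ[atTop] gLf L α := by
    filter_upwards [eventually_gt_atTop (0:ℝ)] with v hv
    rw [gLf]
    field_simp
  have H := hmain.const_mul ((4 * π)⁻¹)
  have hval : (4 * π)⁻¹ * ((1:ℝ) * (2 - 0 - 0)) = 1 / (2 * π) := by
    have : π ≠ 0 := Real.pi_ne_zero
    field_simp
    ring
  rw [hval] at H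
  exact Tendsto.congr' heq H

lemma holder_cont {T α L : ℝ} (hα0 : 0 < α) (hL : 0 < L)
    {ξ : ℝ → EuclideanSpace ℝ (Fin 2)}
    (hHolder : ∀ a ∈ Icc (0 : ℝ) T, ∀ b ∈ Icc (0 : ℝ) T, ‖ξ a - ξ b‖ ≤ L * |a - b| ^ α) :
    ContinuousOn ξ (Icc 0 T) := by
  rw [Metric.continuousOn_iff]
  intro a ha ε hε
  refine ⟨(ε / L) ^ α⁻¹, by positivity, fun b hb hdist => ?_⟩
  have h1 : dist (ξ b) (ξ a) = ‖ξ b - ξ a‖ := dist_eq_norm _ _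
  have h2 : ‖ξ b - ξ a‖ ≤ L * |b - a| ^ α := hHolder b hb a ha
  have h3 : |b - a| ^ α < ((ε / L) ^ α⁻¹) ^ α := by
    apply Real.rpow_lt_rpow (abs_nonneg _) _ hα0
    rwa [Real.dist_eq] at hdist
  have h4 : ((ε / L) ^ α⁻¹) ^ α = ε / L := by
    rw [← Real.rpow_mul (by positivity), inv_mul_cancel₀ hα0.ne', Real.rpow_one]
  rw [h4] at h3
  rw [h1]
  calc ‖ξ b - ξ a‖ ≤ L * |b - a| ^ α := h2
    _ < L * (ε / L) := by exact mul_lt_mul_of_pos_left h3 hL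
    _ = ε := by field_simp

lemma eventual_conds {L α t : ℝ} (hα : 1 / 2 < α) (hL : 0 < L) (ht0 : 0 < t) :
    ∀ᶠ r in 𝓝[>] (0:ℝ), 0 < r ∧ r < 1 ∧ u1f r ≤ etaf r ∧ etaf r ≤ t
      ∧ 2 * L * u1f r ^ α ≤ r := by
  have hv : Tendsto (fun r : ℝ => -Real.log r) (𝓝[>] (0:ℝ)) atTop :=
    tendsto_neg_atBot_atTop.comp Real.tendsto_log_nhdsGT_zero
  -- (iii)
  have hA : Tendsto (fun v : ℝ => Real.exp (-2 * v + (Real.log v + Real.sqrt v))) atTop (𝓝 0) := by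
    apply tendsto_exp_aux 2 two_pos
    have := log_div_tendsto.add sqrt_div_tendsto
    simp only [add_zero] at this
    apply this.congr (fun v => (add_div _ _ _).symm)
  have hA' := hv.eventually (hA.eventually_lt_const zero_lt_one)
  -- (iv)
  have hB' := hv.eventually (tendsto_inv_atTop_zero.eventually_lt_const ht0)
  -- (v)
  have hC : Tendsto (fun v : ℝ => 2 * L * Real.exp (-(2 * α - 1) * v + α * Real.sqrt v))
      atTop (𝓝 0) := by
    have h := tendsto_exp_aux (2 * α - 1) (by linarith) (fun v => α * Real.sqrt v)
      (by simpa [mul_div_assoc] using sqrt_div_tendsto.const_mul α)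
    have := h.const_mul (2 * L)
    simpa using this
  have hC' := hv.eventually (hC.eventually_lt_const zero_lt_one)
  have hone : ∀ᶠ r in 𝓝[>] (0:ℝ), r < 1 :=
    (eventually_lt_nhds zero_lt_one).filter_mono nhdsWithin_le_nhds
  filter_upwards [self_mem_nhdsWithin, hone, hA', hB', hC'] with r hr0 hr1 ha hb hc
  have hr0' : 0 < r := hr0
  set v := -Real.log r with hvv
  have hv0 : 0 < v := by rw [hvv]; simpa using Real.log_neg hr0' hr1
  refine ⟨hr0', hr1, ?_, ?_, ?_⟩
  · -- u1f ≤ etaf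
    rw [u1f_eq hr0', etaf, ← hvv, show v⁻¹ = 1 / v from (one_div v).symm, le_div_iff₀ hv0]
    have e : Real.exp (-2 * v + (Real.log v + Real.sqrt v))
        = Real.exp (Real.sqrt v - 2 * v) * v := by
      rw [show -2 * v + (Real.log v + Real.sqrt v) = (Real.sqrt v - 2 * v) + Real.log v by ring,
        Real.exp_add, Real.exp_log hv0]
    rw [← e]
    exact ha.le
  · -- etaf ≤ t
    rw [etaf, ← hvv]
    exact hb.le
  · -- 2L u1f^α ≤ r
    have e1 : u1f r ^ α = Real.exp ((Real.sqrt v - 2 * v) * α) := by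
      rw [u1f_eq hr0', ← hvv, ← Real.exp_mul]
    have e2 : Real.exp (-(2 * α - 1) * v + α * Real.sqrt v) * Real.exp (-v)
        = Real.exp ((Real.sqrt v - 2 * v) * α) := by
      rw [← Real.exp_add]
      congr 1
      ring
    have hr_eq : r = Real.exp (-v) := by rw [hvv]; exact r_eq_exp hr0'
    calc 2 * L * u1f r ^ α
        = 2 * L * Real.exp (-(2 * α - 1) * v + α * Real.sqrt v) * Real.exp (-v) := by
          rw [e1, ← e2]; ring
      _ ≤ 1 * Real.exp (-v) := by
          apply mul_le_mul_of_nonneg_right hc.le (Real.exp_nonneg _)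
      _ = r := by rw [one_mul, ← hr_eq]


/-- Proposition 4.5: for N = 2 and ξ Hölder with exponent α > 1/2,
F(x,t) ~ (1/(2π)) log(1/|x-ξ(t)|) as x → ξ(t). -/
theorem Fsol2_asymptotics (T α L : ℝ) (hT : 0 < T) (hα : 1 / 2 < α) (hL : 0 < L)
    (ξ : ℝ → EuclideanSpace ℝ (Fin 2))
    (hHolder : ∀ a ∈ Icc (0 : ℝ) T, ∀ b ∈ Icc (0 : ℝ) T, ‖ξ a - ξ b‖ ≤ L * |a - b| ^ α)
    (t : ℝ) (ht : t ∈ Ioo (0 : ℝ) T) :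
    Tendsto (fun x : EuclideanSpace ℝ (Fin 2) =>
        Fsol2 ξ x t / Real.log (1 / ‖x - ξ t‖))
      (nhdsWithin (ξ t) {x | x ≠ ξ t}) (nhds (1 / (2 * π))) := by
  obtain ⟨ht0, htT⟩ := ht
  have hα0 : 0 < α := by linarith
  have hξc : ContinuousOn ξ (Icc 0 T) := holder_cont hα0 hL hHolder
  have hv : Tendsto (fun r : ℝ => -Real.log r) (𝓝[>] (0:ℝ)) atTop :=
    tendsto_neg_atBot_atTop.comp Real.tendsto_log_nhdsGT_zero
  have hone : ∀ᶠ r in 𝓝[>] (0:ℝ), r < 1 :=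
    (eventually_lt_nhds zero_lt_one).filter_mono nhdsWithin_le_nhds
  have hUB : Tendsto (UBf L α t) (𝓝[>] (0:ℝ)) (𝓝 (1 / (2 * π))) := by
    apply Tendsto.congr' _ ((gUf_tendsto hα (L := L) (t := t)).comp hv)
    filter_upwards [self_mem_nhdsWithin, hone] with r hr0 hr1
    exact (UBf_eq hr0 hr1 ht0).symm
  have hLB : Tendsto (LBf L α) (𝓝[>] (0:ℝ)) (𝓝 (1 / (2 * π))) := by
    apply Tendsto.congr' _ ((gLf_tendsto hα (L := L)).comp hv)
    filter_upwards [self_mem_nhdsWithin, hone] with r hr0 hr1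
    exact (LBf_eq hr0 hr1).symm
  have hm : Tendsto (fun x : EuclideanSpace ℝ (Fin 2) => ‖x - ξ t‖)
      (nhdsWithin (ξ t) {x | x ≠ ξ t}) (𝓝[>] (0:ℝ)) := by
    rw [tendsto_nhdsWithin_iff]
    constructor
    · have h1 : Tendsto (fun x : EuclideanSpace ℝ (Fin 2) => ‖x - ξ t‖) (𝓝 (ξ t))
          (𝓝 ‖ξ t - ξ t‖) :=
        ((continuous_id.sub continuous_const).norm).tendsto (ξ t)
      simp only [sub_self, norm_zero] at h1
      exact h1.mono_left nhdsWithin_le_nhds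
    · filter_upwards [self_mem_nhdsWithin] with x hx
      have : x ≠ ξ t := hx
      simpa [mem_Ioi] using norm_pos_iff.2 (sub_ne_zero.2 this)
  have hbnd : ∀ᶠ x in nhdsWithin (ξ t) {x | x ≠ ξ t},
      LBf L α ‖x - ξ t‖ ≤ Fsol2 ξ x t / Real.log (1 / ‖x - ξ t‖)
        ∧ Fsol2 ξ x t / Real.log (1 / ‖x - ξ t‖) ≤ UBf L α t ‖x - ξ t‖ := by
    filter_upwards [hm.eventually (eventual_conds hα hL ht0)] with x hx
    obtain ⟨hr0, hr1, h1, h2, h3⟩ := hx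
    set r : ℝ := ‖x - ξ t‖ with hrr
    set v : ℝ := -Real.log r with hvv
    have hv0 : 0 < v := by rw [hvv]; simpa using Real.log_neg hr0 hr1
    have hu1pos : 0 < u1f r := u1f_pos hr0
    have hetapos : 0 < etaf r := hu1pos.trans_le h1
    have h16 : r ^ 2 / 16 ≤ u1f r := by
      rw [u1f]
      have he : (1:ℝ) ≤ Real.exp (Real.sqrt (-Real.log r)) :=
        Real.one_le_exp (Real.sqrt_nonneg _)
      nlinarith [sq_nonneg r]
    have hMh : ∀ u ∈ Icc (u1f r) t, r * L * u ^ (α - 1) / 2 ≤ Mf L α t r := by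
      intro u hu
      have hu0 : 0 < u := hu1pos.trans_le hu.1
      have hmono : u ^ (α - 1) ≤ u1f r ^ (α - 1) + t ^ (α - 1) := by
        rcases le_or_gt α 1 with hc | hc
        · have hx1 := Real.rpow_le_rpow_of_nonpos hu1pos hu.1 (by linarith : α - 1 ≤ 0)
          have ht' : (0:ℝ) ≤ t ^ (α - 1) := Real.rpow_nonneg ht0.le _
          linarith
        · have hx1 := Real.rpow_le_rpow hu0.le hu.2 (by linarith : (0:ℝ) ≤ α - 1)
          have hu1' : (0:ℝ) ≤ u1f r ^ (α - 1) := Real.rpow_nonneg hu1pos.le _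
          linarith
      rw [Mf]
      have := mul_le_mul_of_nonneg_left hmono (by positivity : (0:ℝ) ≤ r * L)
      linarith
    have hDh : ∀ u ∈ Icc (u1f r) (etaf r),
        r ^ 2 / (4 * u) + r * L * u ^ (α - 1) / 2 + L ^ 2 * u ^ (2 * α - 1) / 4 ≤ Df L α r := by
      intro u hu
      have hu0 : 0 < u := hu1pos.trans_le hu.1
      have t1 : r ^ 2 / (4 * u) ≤ r ^ 2 / (4 * u1f r) := by
        gcongr
        exact hu.1
      have hmono : u ^ (α - 1) ≤ u1f r ^ (α - 1) + etaf r ^ (α - 1) := by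
        rcases le_or_gt α 1 with hc | hc
        · have hx1 := Real.rpow_le_rpow_of_nonpos hu1pos hu.1 (by linarith : α - 1 ≤ 0)
          have ht' : (0:ℝ) ≤ etaf r ^ (α - 1) := Real.rpow_nonneg hetapos.le _
          linarith
        · have hx1 := Real.rpow_le_rpow hu0.le hu.2 (by linarith : (0:ℝ) ≤ α - 1)
          have hu1' : (0:ℝ) ≤ u1f r ^ (α - 1) := Real.rpow_nonneg hu1pos.le _
          linarith
      have t2 : r * L * u ^ (α - 1) / 2 ≤ r * L * (u1f r ^ (α - 1) + etaf r ^ (α - 1)) / 2 := by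
        have := mul_le_mul_of_nonneg_left hmono (by positivity : (0:ℝ) ≤ r * L)
        linarith
      have t3 : L ^ 2 * u ^ (2 * α - 1) / 4 ≤ L ^ 2 * etaf r ^ (2 * α - 1) / 4 := by
        have hx1 := Real.rpow_le_rpow hu0.le hu.2 (by linarith : (0:ℝ) ≤ 2 * α - 1)
        have := mul_le_mul_of_nonneg_left hx1 (by positivity : (0:ℝ) ≤ L ^ 2)
        linarith
      rw [Df]
      linarith
    have hest := estimate T α L hα hL ξ hHolder hξc t ht0 htT x r (u1f r) (etaf r)
      (Mf L α t r) (Df L α r) hrr hr0 h16 h1 h2 h3 hMh hDh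
    have hlog : Real.log (1 / r) = v := by rw [one_div, Real.log_inv, hvv]
    rw [hlog]
    constructor
    · have : LBf L α r = (4 * π)⁻¹ * (Real.exp (-Df L α r) * Real.log (etaf r / u1f r)) / v := by
        rw [LBf, hvv]
      rw [this]
      exact div_le_div_of_nonneg_right hest.1 hv0.le |>.trans (le_of_eq rfl)
    · have : UBf L α t r = (4 * π)⁻¹ * ((1 + Real.log (u1f r / (r ^ 2 / 16)))
          + Real.exp (Mf L α t r) * Real.log (t / u1f r)) / v := by
        rw [UBf, hvv]
      rw [this]
      exact div_le_div_of_nonneg_right hest.2 hv0.le |>.trans (le_of_eq rfl)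
  exact tendsto_of_tendsto_of_tendsto_of_le_of_le' (hLB.comp hm) (hUB.comp hm)
    (hbnd.mono fun x h => h.1) (hbnd.mono fun x h => h.2)
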